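/- Let A, B, C be nonzero integers and let (x₀, y₀, z₀) be an integer solution of A·x² + B·y² + C·z² = 0 with z₀ ≠ 0. Define the polynomials P_x(m,n) = x₀·A·m² + 2·y₀·B·m·n − x₀·B·n², P_y(m,n) = −y₀·A·m² + 2·x₀·A·m·n + y₀·B·n², and P_z(m,n) = z₀·A·m² + z₀·B·n². Then for every integer solution (x, y, z) of A·x² + B·y² + C·z² = 0 there exist coprime integers m, n and coprime integers p, q with q > 0 and q dividing 2·lcm(A,B)·C·z₀², such that q·x = p·P_x(m,n), q·y = p·P_y(m,n), and q·z = p·P_z(m,n). -/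

import Mathlib

theorem natGcdSq' (a b : ℕ) : Nat.gcd (a^2) (b^2) = Nat.gcd a b ^ 2 := by
  rcases Nat.eq_zero_or_pos (Nat.gcd a b) with g0 | g0
  · simp [Nat.eq_zero_of_gcd_eq_zero_left g0, Nat.eq_zero_of_gcd_eq_zero_right g0, g0]
  rcases Nat.exists_coprime' g0 with ⟨g, a', b', g0', co, rfl, rfl⟩
  rw [mul_pow, mul_pow, Nat.gcd_mul_right, (co.pow 2 2).gcd_eq_one, one_mul,
    Nat.gcd_mul_right, co.gcd_eq_one, one_mul]

theorem intGcdSq (M N : ℤ) : Int.gcd (M^2) (N^2) = Int.gcd M N ^ 2 := by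
  unfold Int.gcd
  rw [Int.natAbs_pow, Int.natAbs_pow, natGcdSq']

theorem dvd_natAbs_mul {w k t : ℤ} (h : w ∣ (k.natAbs : ℤ) * t) : w ∣ k * t := by
  rcases Int.natAbs_eq k with hk | hk
  · rwa [← hk] at h
  · rw [hk, neg_mul]; exact dvd_neg.mpr h


theorem auxParam (A B C x₀ y₀ z₀ x y z M N S : ℤ)
    (hS : S ≠ 0)
    (h1 : S * x = x₀ * A * M ^ 2 + 2 * y₀ * B * M * N - x₀ * B * N ^ 2)
    (h2 : S * y = -y₀ * A * M ^ 2 + 2 * x₀ * A * M * N + y₀ * B * N ^ 2)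
    (h3 : S * z = z₀ * A * M ^ 2 + z₀ * B * N ^ 2)
    (hq : S ∣ 2 * lcm A B * C * z₀ ^ 2 * (Int.gcd (((Int.gcd M N : ℤ)) ^ 2) S : ℤ)) :
    ∃ m n p q : ℤ, IsCoprime m n ∧ IsCoprime p q ∧ 0 < q ∧
      q ∣ 2 * lcm A B * C * z₀ ^ 2 ∧
      q * x = p * (x₀ * A * m ^ 2 + 2 * y₀ * B * m * n - x₀ * B * n ^ 2) ∧
      q * y = p * (-y₀ * A * m ^ 2 + 2 * x₀ * A * m * n + y₀ * B * n ^ 2) ∧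
      q * z = p * (z₀ * A * m ^ 2 + z₀ * B * n ^ 2) := by
  by_cases hMN : M = 0 ∧ N = 0
  · obtain ⟨hM, hN⟩ := hMN
    subst hM hN
    have hx : x = 0 := by
      have := h1; rw [show S * x = S * x from rfl] at this
      have h1' : S * x = 0 := by linarith [h1]
      rcases mul_eq_zero.1 h1' with h | h
      · exact absurd h hS
      · exact h
    have hy : y = 0 := by
      have h2' : S * y = 0 := by linarith [h2]
      rcases mul_eq_zero.1 h2' with h | h
      · exact absurd h hS
      · exact h
    have hz : z = 0 := by
      have h3' : S * z = 0 := by linarith [h3]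
      rcases mul_eq_zero.1 h3' with h | h
      · exact absurd h hS
      · exact h
    exact ⟨1, 0, 0, 1, isCoprime_one_left, isCoprime_zero_left.2 isUnit_one, one_pos,
      one_dvd _, by simp [hx], by simp [hy], by simp [hz]⟩
  · have hGpos : 0 < Int.gcd M N := by
      rw [Int.gcd_pos_iff]
      by_contra hcon
      push_neg at hcon
      exact hMN ⟨hcon.1, hcon.2⟩
    set G : ℤ := (Int.gcd M N : ℤ) with hGdef
    have hG0 : G ≠ 0 := by positivity
    set m : ℤ := M / G with hmdef
    set n : ℤ := N / G with hndef
    have hm : G * m = M := Int.mul_ediv_cancel' (Int.gcd_dvd_left _ _)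
    have hn : G * n = N := Int.mul_ediv_cancel' (Int.gcd_dvd_right _ _)
    have hcop : IsCoprime m n := by
      rw [Int.isCoprime_iff_gcd_eq_one]
      exact Int.gcd_div_gcd_div_gcd hGpos
    set d : ℤ := (Int.gcd (G ^ 2) S : ℤ) with hddef
    have hdpos : 0 < Int.gcd (G ^ 2) S := Int.gcd_pos_iff.2 (Or.inr hS)
    have hd0 : d ≠ 0 := by positivity
    set p₀ : ℤ := G ^ 2 / d with hp₀def
    set q₀ : ℤ := S / d with hq₀def
    have hp₀ : d * p₀ = G ^ 2 := Int.mul_ediv_cancel' (Int.gcd_dvd_left _ _)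
    have hq₀ : d * q₀ = S := Int.mul_ediv_cancel' (Int.gcd_dvd_right _ _)
    have hcop2 : IsCoprime p₀ q₀ := by
      rw [Int.isCoprime_iff_gcd_eq_one]
      exact Int.gcd_div_gcd_div_gcd hdpos
    have hq₀ne : q₀ ≠ 0 := by
      intro hcon
      rw [hcon, mul_zero] at hq₀
      exact hS hq₀.symm
    have hq₀dvd : q₀ ∣ 2 * lcm A B * C * z₀ ^ 2 := by
      obtain ⟨k, hk⟩ := hq
      refine ⟨k, ?_⟩
      apply mul_left_cancel₀ hd0
      calc d * (2 * lcm A B * C * z₀ ^ 2) = 2 * lcm A B * C * z₀ ^ 2 * d := by ring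
        _ = S * k := hk
        _ = d * (q₀ * k) := by rw [← hq₀]; ring
    have ex : q₀ * x = p₀ * (x₀ * A * m ^ 2 + 2 * y₀ * B * m * n - x₀ * B * n ^ 2) := by
      apply mul_left_cancel₀ hd0
      rw [← hm, ← hn, ← hq₀] at h1
      linear_combination h1 - (x₀ * A * m ^ 2 + 2 * y₀ * B * m * n - x₀ * B * n ^ 2) * hp₀
    have ey : q₀ * y = p₀ * (-y₀ * A * m ^ 2 + 2 * x₀ * A * m * n + y₀ * B * n ^ 2) := by
      apply mul_left_cancel₀ hd0
      rw [← hm, ← hn, ← hq₀] at h2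
      linear_combination h2 - (-y₀ * A * m ^ 2 + 2 * x₀ * A * m * n + y₀ * B * n ^ 2) * hp₀
    have ez : q₀ * z = p₀ * (z₀ * A * m ^ 2 + z₀ * B * n ^ 2) := by
      apply mul_left_cancel₀ hd0
      rw [← hm, ← hn, ← hq₀] at h3
      linear_combination h3 - (z₀ * A * m ^ 2 + z₀ * B * n ^ 2) * hp₀
    rcases hq₀ne.lt_or_gt with hneg | hpos
    · refine ⟨m, n, -p₀, -q₀, hcop, hcop2.neg_neg, by linarith, (neg_dvd).2 hq₀dvd, ?_, ?_, ?_⟩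
      · linear_combination -ex
      · linear_combination -ey
      · linear_combination -ez
    · exact ⟨m, n, p₀, q₀, hcop, hcop2, hpos, hq₀dvd, ex, ey, ez⟩


theorem branch2Aux (A B C x₀ y₀ z₀ : ℤ) (hA : A ≠ 0) (hB : B ≠ 0) (hC : C ≠ 0)
    (hz₀ : z₀ ≠ 0) (h₀ : A * x₀ ^ 2 + B * y₀ ^ 2 + C * z₀ ^ 2 = 0)
    (x y z : ℤ) (h : A * x ^ 2 + B * y ^ 2 + C * z ^ 2 = 0)
    (hw : A * x * x₀ + B * y * y₀ - C * z * z₀ = 0)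
    (aux : ∀ M N S : ℤ, S ≠ 0 →
      S * x = x₀ * A * M ^ 2 + 2 * y₀ * B * M * N - x₀ * B * N ^ 2 →
      S * y = -y₀ * A * M ^ 2 + 2 * x₀ * A * M * N + y₀ * B * N ^ 2 →
      S * z = z₀ * A * M ^ 2 + z₀ * B * N ^ 2 →
      S ∣ 2 * lcm A B * C * z₀ ^ 2 * (Int.gcd (((Int.gcd M N : ℤ)) ^ 2) S : ℤ) →
      ∃ m n p q : ℤ, IsCoprime m n ∧ IsCoprime p q ∧ 0 < q ∧
        q ∣ 2 * lcm A B * C * z₀ ^ 2 ∧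
        q * x = p * (x₀ * A * m ^ 2 + 2 * y₀ * B * m * n - x₀ * B * n ^ 2) ∧
        q * y = p * (-y₀ * A * m ^ 2 + 2 * x₀ * A * m * n + y₀ * B * n ^ 2) ∧
        q * z = p * (z₀ * A * m ^ 2 + z₀ * B * n ^ 2)) :
    ∃ m n p q : ℤ, IsCoprime m n ∧ IsCoprime p q ∧ 0 < q ∧
      q ∣ 2 * lcm A B * C * z₀ ^ 2 ∧
      q * x = p * (x₀ * A * m ^ 2 + 2 * y₀ * B * m * n - x₀ * B * n ^ 2) ∧
      q * y = p * (-y₀ * A * m ^ 2 + 2 * x₀ * A * m * n + y₀ * B * n ^ 2) ∧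
      q * z = p * (z₀ * A * m ^ 2 + z₀ * B * n ^ 2) := by
  have hM0 : x * z₀ + x₀ * z = 0 := by
    have e1 : A * C * (x * z₀ + x₀ * z) ^ 2 = 0 := by
      linear_combination (-A * x * x₀ + B * y * y₀ + C * z * z₀) * hw
        + (A * x₀ ^ 2 + C * z₀ ^ 2) * h - (B * y ^ 2) * h₀
    have e2 : (x * z₀ + x₀ * z) ^ 2 = 0 := by
      rcases mul_eq_zero.1 e1 with h' | h'
      · exact absurd h' (mul_ne_zero hA hC)
      · exact h'
    exact pow_eq_zero_iff (two_ne_zero) |>.1 e2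
  have hN0 : y * z₀ + y₀ * z = 0 := by
    have e1 : B * C * (y * z₀ + y₀ * z) ^ 2 = 0 := by
      linear_combination (A * x * x₀ - B * y * y₀ + C * z * z₀) * hw
        + (B * y₀ ^ 2 + C * z₀ ^ 2) * h - (A * x ^ 2) * h₀
    have e2 : (y * z₀ + y₀ * z) ^ 2 = 0 := by
      rcases mul_eq_zero.1 e1 with h' | h'
      · exact absurd h' (mul_ne_zero hB hC)
      · exact h'
    exact pow_eq_zero_iff (two_ne_zero) |>.1 e2
  by_cases hz : z = 0
  · have hx0 : x = 0 := by
      have : x * z₀ = 0 := by rw [hz] at hM0; linarith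
      rcases mul_eq_zero.1 this with h' | h'
      · exact h'
      · exact absurd h' hz₀
    have hy0 : y = 0 := by
      have : y * z₀ = 0 := by rw [hz] at hN0; linarith
      rcases mul_eq_zero.1 this with h' | h'
      · exact h'
      · exact absurd h' hz₀
    exact ⟨1, 0, 0, 1, isCoprime_one_left, isCoprime_zero_left.2 isUnit_one, one_pos,
      one_dvd _, by simp [hx0], by simp [hy0], by simp [hz]⟩
  · -- z ≠ 0
    set c₀n : ℕ := Int.gcd ((Int.gcd x₀ y₀ : ℤ)) z₀ with hc₀ndef
    have hc₀npos : 0 < c₀n := Int.gcd_pos_iff.2 (Or.inr hz₀)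
    set c₀ : ℤ := (c₀n : ℤ) with hc₀def
    have hc₀0 : c₀ ≠ 0 := by positivity
    have hdx : c₀ ∣ x₀ := dvd_trans (Int.gcd_dvd_left _ _) (Int.gcd_dvd_left _ _)
    have hdy : c₀ ∣ y₀ := dvd_trans (Int.gcd_dvd_left _ _) (Int.gcd_dvd_right _ _)
    have hdz : c₀ ∣ z₀ := (Int.gcd_dvd_right _ _)
    set a : ℤ := x₀ / c₀ with hadef
    set b : ℤ := y₀ / c₀ with hbdef
    set c : ℤ := z₀ / c₀ with hcdef
    have ha : c₀ * a = x₀ := Int.mul_ediv_cancel' hdx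
    have hb : c₀ * b = y₀ := Int.mul_ediv_cancel' hdy
    have hc : c₀ * c = z₀ := Int.mul_ediv_cancel' hdz
    have hcne : c ≠ 0 := by
      intro hcon
      rw [hcon, mul_zero] at hc
      exact hz₀ hc.symm
    have htriple : Int.gcd ((Int.gcd a b : ℤ)) c = 1 := by
      have e1 : Int.gcd x₀ y₀ = c₀n * Int.gcd a b := by
        rw [← ha, ← hb, Int.gcd_mul_left]
        simp [hc₀def]
      have e2 : c₀n = c₀n * Int.gcd ((Int.gcd a b : ℤ)) c := by
        conv_lhs => rw [hc₀ndef, e1, ← hc]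
        push_cast
        rw [show ((c₀n : ℤ)) * (Int.gcd a b : ℤ) = c₀ * (Int.gcd a b : ℤ) from rfl]
        rw [Int.gcd_mul_left]
        simp [hc₀def]
      nth_rewrite 1 [show c₀n = c₀n * 1 from (mul_one _).symm] at e2
      exact (Nat.eq_of_mul_eq_mul_left hc₀npos e2).symm
    -- c ∣ z
    have hxc : x * c + a * z = 0 := by
      have : c₀ * (x * c + a * z) = 0 := by
        rw [mul_add]
        linear_combination hM0 - x * hc.symm - z * ha.symm
      rcases mul_eq_zero.1 this with h' | h'
      · exact absurd h' hc₀0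
      · exact h'
    have hyc : y * c + b * z = 0 := by
      have : c₀ * (y * c + b * z) = 0 := by
        rw [mul_add]
        linear_combination hN0 - y * hc.symm - z * hb.symm
      rcases mul_eq_zero.1 this with h' | h'
      · exact absurd h' hc₀0
      · exact h'
    have hcz : c ∣ z := by
      have d1 : c ∣ z * a := ⟨-x, by linear_combination hxc⟩
      have d2 : c ∣ z * b := ⟨-y, by linear_combination hyc⟩
      have d3 : c ∣ z * c := ⟨z, by ring⟩
      have s1 : c ∣ ((Int.gcd (z * a) (z * b) : ℕ) : ℤ) := Int.dvd_coe_gcd d1 d2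
      rw [Int.gcd_mul_left] at s1
      push_cast at s1
      -- s1 : c ∣ (z.natAbs : ℤ) * (Int.gcd a b : ℤ)
      have d3' : c ∣ |z| * c := by
        rcases abs_choice z with hzz | hzz
        · rw [hzz]; exact d3
        · rw [hzz, neg_mul]; exact dvd_neg.2 d3
      have s2 : c ∣ ((Int.gcd (|z| * (Int.gcd a b : ℤ)) (|z| * c) : ℕ) : ℤ) :=
        Int.dvd_coe_gcd s1 d3'
      rw [Int.gcd_mul_left, htriple, mul_one, Int.natAbs_abs] at s2
      exact (Int.dvd_natAbs).1 s2
    set t : ℤ := z / c with htdef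
    have htc : c * t = z := Int.mul_ediv_cancel' hcz
    -- g₂
    have hab : ¬(a = 0 ∧ b = 0) := by
      rintro ⟨ha0, hb0⟩
      rw [ha0, mul_zero] at ha
      rw [hb0, mul_zero] at hb
      rw [← ha, ← hb] at h₀
      have : C * z₀ ^ 2 = 0 := by linarith
      rcases mul_eq_zero.1 this with h' | h'
      · exact hC h'
      · exact hz₀ (pow_eq_zero_iff two_ne_zero |>.1 h')
    set g₂n : ℕ := Int.gcd (B * b) (A * a) with hg₂ndef
    have hg₂pos : 0 < g₂n := by
      rw [hg₂ndef, Int.gcd_pos_iff]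
      by_contra hcon
      push_neg at hcon
      obtain ⟨e1, e2⟩ := hcon
      exact hab ⟨by
        rcases mul_eq_zero.1 e2 with h' | h'
        · exact absurd h' hA
        · exact h', by
        rcases mul_eq_zero.1 e1 with h' | h'
        · exact absurd h' hB
        · exact h'⟩
    set g₂ : ℤ := (g₂n : ℤ) with hg₂def
    have hg₂0 : g₂ ≠ 0 := by positivity
    have hda' : g₂ ∣ A * a := (Int.gcd_dvd_right _ _)
    have hdb' : g₂ ∣ B * b := (Int.gcd_dvd_left _ _)
    set a' : ℤ := A * a / g₂ with ha'def
    set b' : ℤ := B * b / g₂ with hb'def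
    have ha' : g₂ * a' = A * a := Int.mul_ediv_cancel' hda'
    have hb' : g₂ * b' = B * b := Int.mul_ediv_cancel' hdb'
    -- reduced conic
    have h₂ : A * a ^ 2 + B * b ^ 2 + C * c ^ 2 = 0 := by
      have e1 : c₀ ^ 2 * (A * a ^ 2 + B * b ^ 2 + C * c ^ 2) = 0 := by
        linear_combination h₀ + (A * (x₀ + c₀ * a)) * ha + (B * (y₀ + c₀ * b)) * hb
          + (C * (z₀ + c₀ * c)) * hc
      rcases mul_eq_zero.1 e1 with h' | h'
      · exact absurd h' (pow_ne_zero 2 hc₀0)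
      · exact h'
    set M : ℤ := B * y₀ * z with hMdef
    set N : ℤ := -(A * x₀ * z) with hNdef
    set S : ℤ := -(A * B * C * z₀ ^ 3 * z) with hSdef
    have hS : S ≠ 0 := by
      simp only [hSdef, neg_ne_zero]
      exact mul_ne_zero (mul_ne_zero (mul_ne_zero (mul_ne_zero hA hB) hC) (pow_ne_zero 3 hz₀)) hz
    have h1 : S * x = x₀ * A * M ^ 2 + 2 * y₀ * B * M * N - x₀ * B * N ^ 2 := by
      simp only [hSdef, hMdef, hNdef]
      linear_combination (-(A * B * C * z₀ ^ 2 * z)) * hM0 + (A * B * x₀ * z ^ 2) * h₀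
    have h2 : S * y = -y₀ * A * M ^ 2 + 2 * x₀ * A * M * N + y₀ * B * N ^ 2 := by
      simp only [hSdef, hMdef, hNdef]
      linear_combination (-(A * B * C * z₀ ^ 2 * z)) * hN0 + (A * B * y₀ * z ^ 2) * h₀
    have h3 : S * z = z₀ * A * M ^ 2 + z₀ * B * N ^ 2 := by
      simp only [hSdef, hMdef, hNdef]
      linear_combination (-(A * B * z₀ * z ^ 2)) * h₀
    -- the gcd divisibility
    have hG : c₀ * g₂ * z ∣ (Int.gcd M N : ℤ) := by
      apply Int.dvd_coe_gcd
      · exact ⟨b', by simp only [hMdef]; linear_combination (-(B * z)) * hb + (-(c₀ * z)) * hb'⟩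
      · exact ⟨-a', by simp only [hNdef]; linear_combination (A * z) * ha + (c₀ * z) * ha'⟩
    obtain ⟨e₁, hGe⟩ := hG
    set k : ℤ := B * a' ^ 2 + A * b' ^ 2 with hkdef
    have hk : A * B * C * c ^ 2 = -(g₂ ^ 2 * k) := by
      simp only [hkdef]
      linear_combination A * B * h₂ + (B * (g₂ * a' + A * a)) * ha' + (A * (g₂ * b' + B * b)) * hb'
    set h' : ℤ := c₀ ^ 2 * g₂ ^ 2 * c ^ 2 * t with hh'def
    have hh'G : h' ∣ (Int.gcd M N : ℤ) ^ 2 := by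
      refine ⟨t * e₁ ^ 2, ?_⟩
      rw [hGe, hh'def, ← htc]
      ring
    have hh'S : h' ∣ S := by
      refine ⟨c₀ * k, ?_⟩
      rw [hSdef, hh'def, ← hc, ← htc]
      linear_combination (-(c₀ ^ 3 * c ^ 2 * t)) * hk
    have hh'd : h' ∣ (Int.gcd ((Int.gcd M N : ℤ) ^ 2) S : ℤ) := Int.dvd_coe_gcd hh'G hh'S
    -- A*B divides 2*L*c₀*g₂^2
    set L : ℤ := lcm A B with hLdef
    have hG₀g₂ : (Int.gcd A B : ℤ) ∣ g₂ := by
      apply Int.dvd_coe_gcd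
      · exact Dvd.dvd.mul_right (Int.gcd_dvd_right _ _) b
      · exact Dvd.dvd.mul_right (Int.gcd_dvd_left _ _) a
    have hABdvd : A * B ∣ 2 * L * c₀ * g₂ ^ 2 := by
      obtain ⟨u, hu⟩ := hG₀g₂
      have habs : ((Int.gcd A B : ℤ)) * L = ((A * B).natAbs : ℤ) := by
        rw [hLdef, ← Int.coe_lcm]
        push_cast [← Int.gcd_mul_lcm A B]
        rw [← Int.natCast_mul, Int.gcd_mul_lcm, ← Int.natAbs_mul, Int.natCast_natAbs]
      rcases Int.natAbs_eq (A * B) with hab1 | hab1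
      · refine ⟨2 * c₀ * u * g₂, ?_⟩
        rw [hab1, ← habs, hu]
        ring
      · refine ⟨-(2 * c₀ * u * g₂), ?_⟩
        rw [hab1, ← habs, hu]
        ring
    obtain ⟨v, hv⟩ := hABdvd
    obtain ⟨e₂, he₂⟩ := hh'd
    have hq : S ∣ 2 * lcm A B * C * z₀ ^ 2 * (Int.gcd (((Int.gcd M N : ℤ)) ^ 2) S : ℤ) := by
      refine ⟨-v * e₂, ?_⟩
      rw [he₂]
      have core : 2 * L * C * z₀ ^ 2 * h' = S * (-v) := by
        rw [hSdef, hh'def, ← hc, ← htc]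
        linear_combination (C * c₀ ^ 3 * c ^ 4 * t) * hv
      calc 2 * lcm A B * C * z₀ ^ 2 * (h' * e₂) = (2 * L * C * z₀ ^ 2 * h') * e₂ := by
            rw [hLdef]; ring
        _ = (S * (-v)) * e₂ := by rw [core]
        _ = S * (-v * e₂) := by ring
    exact aux M N S hS h1 h2 h3 hq

/-- **Theorem (general solution of A x² + B y² + C z² = 0).**
Given nonzero integers `A, B, C` and a particular solution `(x₀, y₀, z₀)` with `z₀ ≠ 0`,
every integer solution `(x, y, z)` is of the form
`(x, y, z) = (p/q) · (P_x(m,n), P_y(m,n), P_z(m,n))`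
where `m, n` are coprime, `p, q` are coprime, `q > 0` and `q ∣ 2·lcm(A,B)·C·z₀²`. -/
theorem stmt0 (A B C x₀ y₀ z₀ : ℤ) (hA : A ≠ 0) (hB : B ≠ 0) (hC : C ≠ 0)
    (hz₀ : z₀ ≠ 0) (h₀ : A * x₀ ^ 2 + B * y₀ ^ 2 + C * z₀ ^ 2 = 0)
    (x y z : ℤ) (h : A * x ^ 2 + B * y ^ 2 + C * z ^ 2 = 0) :
    ∃ m n p q : ℤ, IsCoprime m n ∧ IsCoprime p q ∧ 0 < q ∧
      q ∣ 2 * lcm A B * C * z₀ ^ 2 ∧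
      q * x = p * (x₀ * A * m ^ 2 + 2 * y₀ * B * m * n - x₀ * B * n ^ 2) ∧
      q * y = p * (-y₀ * A * m ^ 2 + 2 * x₀ * A * m * n + y₀ * B * n ^ 2) ∧
      q * z = p * (z₀ * A * m ^ 2 + z₀ * B * n ^ 2) := by
  by_cases hw : A * x * x₀ + B * y * y₀ - C * z * z₀ = 0
  · exact branch2Aux A B C x₀ y₀ z₀ hA hB hC hz₀ h₀ x y z h hw
      (fun M N S hS h1 h2 h3 hq => auxParam A B C x₀ y₀ z₀ x y z M N S hS h1 h2 h3 hq)
  · -- Branch 1: w ≠ 0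
    set w : ℤ := A * x * x₀ + B * y * y₀ - C * z * z₀ with hwdef
    set M : ℤ := x * z₀ + x₀ * z with hMdef
    set N : ℤ := y * z₀ + y₀ * z with hNdef
    set S : ℤ := 2 * z₀ ^ 2 * w with hSdef
    have hS : S ≠ 0 := by
      simp only [hSdef]
      exact mul_ne_zero (mul_ne_zero two_ne_zero (pow_ne_zero 2 hz₀)) hw
    have h1 : S * x = x₀ * A * M ^ 2 + 2 * y₀ * B * M * N - x₀ * B * N ^ 2 := by
      simp only [hSdef, hwdef, hMdef, hNdef]
      linear_combination (x₀ * z₀ ^ 2) * h - (2 * x * z * z₀ + x₀ * z ^ 2) * h₀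
    have h2 : S * y = -y₀ * A * M ^ 2 + 2 * x₀ * A * M * N + y₀ * B * N ^ 2 := by
      simp only [hSdef, hwdef, hMdef, hNdef]
      linear_combination (y₀ * z₀ ^ 2) * h - (2 * y * z * z₀ + y₀ * z ^ 2) * h₀
    have h3 : S * z = z₀ * A * M ^ 2 + z₀ * B * N ^ 2 := by
      simp only [hSdef, hwdef, hMdef, hNdef]
      linear_combination (-(z₀ ^ 3)) * h - (z₀ * z ^ 2) * h₀
    -- divisibility facts
    have hwM : w ∣ A * C * M ^ 2 := by
      refine ⟨-A * x * x₀ + B * y * y₀ + C * z * z₀, ?_⟩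
      simp only [hwdef, hMdef]
      linear_combination (A * x₀ ^ 2 + C * z₀ ^ 2) * h - (B * y ^ 2) * h₀
    have hwN : w ∣ B * C * N ^ 2 := by
      refine ⟨A * x * x₀ - B * y * y₀ + C * z * z₀, ?_⟩
      simp only [hwdef, hNdef]
      linear_combination (B * y₀ ^ 2 + C * z₀ ^ 2) * h - (A * x ^ 2) * h₀
    set L : ℤ := lcm A B with hLdef
    have hwLM : w ∣ L * C * M ^ 2 := by
      obtain ⟨kA, hkA⟩ : A ∣ L := dvd_lcm_left A B
      obtain ⟨u, hu⟩ := hwM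
      exact ⟨kA * u, by rw [hkA]; linear_combination kA * hu⟩
    have hwLN : w ∣ L * C * N ^ 2 := by
      obtain ⟨kB, hkB⟩ : B ∣ L := dvd_lcm_right A B
      obtain ⟨u, hu⟩ := hwN
      exact ⟨kB * u, by rw [hkB]; linear_combination kB * hu⟩
    set G : ℤ := (Int.gcd M N : ℤ) with hGdef
    have hgcd1 : w ∣ L * C * G ^ 2 := by
      have step : w ∣ (Int.gcd (L * C * M ^ 2) (L * C * N ^ 2) : ℤ) := Int.dvd_coe_gcd hwLM hwLN
      rw [show L * C * M ^ 2 = L * C * M ^ 2 from rfl] at step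
      have heq : Int.gcd (L * C * M ^ 2) (L * C * N ^ 2)
          = (L * C).natAbs * (Int.gcd M N ^ 2) := by
        rw [Int.gcd_mul_left, intGcdSq]
      rw [heq] at step
      push_cast at step
      have step2 : w ∣ ((L * C).natAbs : ℤ) * G ^ 2 := by
        convert step using 2
        simp [hGdef]
      exact dvd_natAbs_mul step2
    have hwS : w ∣ S := ⟨2 * z₀ ^ 2, by rw [hSdef]; ring⟩
    have hgcd2 : w ∣ L * C * S := Dvd.dvd.mul_left hwS (L * C)
    set d : ℤ := (Int.gcd (G ^ 2) S : ℤ) with hddef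
    have hgcd3 : w ∣ L * C * d := by
      have step : w ∣ (Int.gcd (L * C * G ^ 2) (L * C * S) : ℤ) := Int.dvd_coe_gcd hgcd1 hgcd2
      rw [Int.gcd_mul_left] at step
      push_cast at step
      exact dvd_natAbs_mul (by convert step using 2; simp [hddef])
    have hq : S ∣ 2 * lcm A B * C * z₀ ^ 2 * (Int.gcd (((Int.gcd M N : ℤ)) ^ 2) S : ℤ) := by
      obtain ⟨u, hu⟩ := hgcd3
      refine ⟨u, ?_⟩
      rw [hSdef]
      calc 2 * lcm A B * C * z₀ ^ 2 * (Int.gcd (((Int.gcd M N : ℤ)) ^ 2) S : ℤ)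
          = 2 * z₀ ^ 2 * (L * C * d) := by rw [hLdef, hddef, hGdef]; ring
        _ = 2 * z₀ ^ 2 * (w * u) := by rw [hu]
        _ = 2 * z₀ ^ 2 * w * u := by ring
    exact auxParam A B C x₀ y₀ z₀ x y z M N S hS h1 h2 h3 hq
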